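/- The Huber smoothing function is globally Lipschitz continuous on ℝ × ℝ with the explicit estimate |h(ε,t) − h(δ,s)| ≤ |t − s| + (1/2)·|ε − δ| for all ε, δ, s, t ∈ ℝ. -/

import Mathlib

/-- The Huber smoothing function `h(ε,t)`: for `ε ≠ 0` it equals `t - |ε|/2` if `t > |ε|`,
`t²/(2|ε|)` if `0 ≤ t ≤ |ε|`, and `0` if `t < 0`; and `h(0,t) = max 0 t`. -/
noncomputable def huber (ε t : ℝ) : ℝ :=
  if ε = 0 then max 0 t
  else if |ε| < t then t - |ε| / 2
  else if 0 ≤ t then t ^ 2 / (2 * |ε|)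
  else 0

lemma lipA (ε s t : ℝ) (hst : s ≤ t) :
    0 ≤ huber ε t - huber ε s ∧ huber ε t - huber ε s ≤ t - s := by
  unfold huber
  by_cases hε : ε = 0
  · simp only [hε, if_true]
    rcases le_total 0 s with hs | hs <;> rcases le_total 0 t with ht | ht <;>
      simp [max_eq_left, max_eq_right, *] <;> constructor <;> linarith
  · have he : 0 < |ε| := abs_pos.mpr hε
    simp only [hε, if_false]
    constructor <;>
    · split_ifs <;>
      first
      | linarith
      | (rw [sub_zero, div_le_iff₀ (by positivity)]; nlinarith [sq_nonneg t, mul_pos he he])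
      | (have h : s ^ 2 / (2 * |ε|) ≤ |ε| / 2 := by
           rw [div_le_div_iff₀ (by positivity) (by norm_num)]; nlinarith
         linarith)
      | (rw [← sub_nonneg]
         have h : t - s - (t - |ε| / 2 - s ^ 2 / (2 * |ε|)) = (s - |ε|) ^ 2 / (2 * |ε|) := by
           field_simp; ring
         rw [h]; positivity)
      | (rw [← sub_div]; exact div_nonneg (by nlinarith) (by positivity))
      | (rw [← sub_div, div_le_iff₀ (by positivity)]; nlinarith)
      | positivity
      | (rw [sub_zero]; positivity)

lemma lipB (ε δ t : ℝ) (hde : |δ| ≤ |ε|) :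
    0 ≤ huber δ t - huber ε t ∧ huber δ t - huber ε t ≤ (|ε| - |δ|) / 2 := by
  unfold huber
  by_cases hε : ε = 0
  · have hδ : δ = 0 := abs_eq_zero.mp (le_antisymm (by simpa [hε] using hde) (abs_nonneg δ))
    simp [hε, hδ]
  · have he : 0 < |ε| := abs_pos.mpr hε
    by_cases hδ : δ = 0
    · simp only [hδ, if_true, hε, if_false, abs_zero]
      rcases le_total 0 t with ht | ht
      · rw [max_eq_right ht]
        split_ifs with h1
        · constructor <;> linarith
        · push_neg at h1
          constructor
          · rw [sub_nonneg, div_le_iff₀ (by positivity)]; nlinarith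
          · rw [← sub_nonneg]
            have h : (|ε| - 0) / 2 - (t - t ^ 2 / (2 * |ε|)) = (t - |ε|) ^ 2 / (2 * |ε|) := by
              field_simp; ring
            rw [h]; positivity
      · rw [max_eq_left (by linarith)]
        split_ifs with h1 h2
        · constructor <;> linarith
        · have h0 : t = 0 := le_antisymm ht h2
          subst h0
          constructor <;> simp <;> positivity
        · constructor <;> simp <;> positivity
    · have hd : 0 < |δ| := abs_pos.mpr hδ
      simp only [hε, hδ, if_false]
      constructor <;>
      · split_ifs <;>
        first
        | linarith
        | (have h : t ^ 2 / (2 * |ε|) ≤ t - |δ| / 2 := by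
             rw [div_le_iff₀ (by positivity)]; nlinarith
           linarith)
        | (rw [← sub_nonneg]
           have h : (|ε| - |δ|) / 2 - (t - |δ| / 2 - t ^ 2 / (2 * |ε|)) =
               (t - |ε|) ^ 2 / (2 * |ε|) := by field_simp; ring
           rw [h]; positivity)
        | (have key : t ^ 2 / (2 * |δ|) - t ^ 2 / (2 * |ε|) =
               t ^ 2 * (|ε| - |δ|) / (2 * |δ| * |ε|) := by field_simp
           rw [key]
           first
           | exact div_nonneg (mul_nonneg (sq_nonneg t) (by linarith)) (by positivity)
           | (have ht : 0 ≤ t := by assumption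
              have htd : t ≤ |δ| := not_lt.mp (by assumption)
              rw [div_le_div_iff₀ (by positivity) two_pos]
              nlinarith [mul_nonneg (mul_nonneg (sub_nonneg.2 hde) hd.le)
                  (sub_nonneg.2 (htd.trans hde)),
                mul_nonneg (mul_nonneg (sub_nonneg.2 hde) ht) (sub_nonneg.2 htd)]))
        | (rw [sub_zero]; positivity)

lemma lipA' (ε s t : ℝ) : |huber ε t - huber ε s| ≤ |t - s| := by
  rcases le_total s t with h | h
  · obtain ⟨h1, h2⟩ := lipA ε s t h
    rw [abs_of_nonneg h1, abs_of_nonneg (by linarith : (0:ℝ) ≤ t - s)]; linarith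
  · obtain ⟨h1, h2⟩ := lipA ε t s h
    rw [abs_sub_comm, abs_sub_comm t s, abs_of_nonneg h1,
      abs_of_nonneg (by linarith : (0:ℝ) ≤ s - t)]
    linarith

lemma lipB' (ε δ t : ℝ) : |huber ε t - huber δ t| ≤ |ε - δ| / 2 := by
  have key : |ε| - |δ| ≤ |ε - δ| := abs_sub_abs_le_abs_sub ε δ
  have key2 : |δ| - |ε| ≤ |ε - δ| := by
    rw [abs_sub_comm]; exact abs_sub_abs_le_abs_sub δ ε
  rcases le_total |δ| |ε| with h | h
  · obtain ⟨h1, h2⟩ := lipB ε δ t h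
    rw [abs_sub_comm, abs_of_nonneg h1]; linarith
  · obtain ⟨h1, h2⟩ := lipB δ ε t h
    rw [abs_of_nonneg h1]; linarith

/-- Global Lipschitz continuity of the Huber function on `ℝ × ℝ`:
`|h(ε,t) − h(δ,s)| ≤ |t − s| + |ε − δ|/2`. -/
theorem huber_global_lipschitz (ε δ s t : ℝ) :
    |huber ε t - huber δ s| ≤ |t - s| + (1 / 2) * |ε - δ| := by
  have h1 := abs_sub_le (huber ε t) (huber ε s) (huber δ s)
  have h2 := lipA' ε s t
  have h3 := lipB' ε δ s
  linarith
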